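/- arXiv:1304.3318 — 2 statements merged into one kernel-verified Lean document; each statement's English description precedes it below -/
import Mathlib

section
/- Let g₁, g₂ ∈ SL(2,ℝ) be hyperbolic matrices (|trace| > 2) such that the four fixed points of g₁ and g₂ on the projective line ℙ¹(ℝ) (i.e., their eigendirections) are pairwise distinct. Then for all sufficiently large p ∈ ℕ, the matrices g₁^p and g₂^p generate a free subgroup of SL(2,ℝ) of rank 2. -/
open Matrix Pointwise

namespace PPong

noncomputable section

abbrev SL2 := Matrix.SpecialLinearGroup (Fin 2) ℝ

/-- nonzero vectors of ℝ² -/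
def NZ : Type := {v : Fin 2 → ℝ // v ≠ 0}

/-- 2×2 determinant of a pair of vectors -/
def dd (u w : Fin 2 → ℝ) : ℝ := u 0 * w 1 - u 1 * w 0

lemma dd_self (v : Fin 2 → ℝ) : dd v v = 0 := by simp [dd]; ring

lemma dd_antisymm (u w : Fin 2 → ℝ) : dd w u = -dd u w := by simp [dd]; ring

lemma abs_dd_comm (u w : Fin 2 → ℝ) : |dd u w| = |dd w u| := by
  rw [dd_antisymm, abs_neg]

lemma cramer (e f v : Fin 2 → ℝ) :
    (dd v f) • e + (dd e v) • f = (dd e f) • v := by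
  funext i
  fin_cases i <;> (simp [dd, Pi.add_apply, Pi.smul_apply, smul_eq_mul]; ring)

lemma dd_smul_right (u w : Fin 2 → ℝ) (a : ℝ) : dd u (a • w) = a * dd u w := by
  simp [dd, Pi.smul_apply, smul_eq_mul]; ring

lemma dd_smul_left (u w : Fin 2 → ℝ) (a : ℝ) : dd (a • u) w = a * dd u w := by
  simp [dd, Pi.smul_apply, smul_eq_mul]; ring

lemma dd_add_right (u w w' : Fin 2 → ℝ) : dd u (w + w') = dd u w + dd u w' := by
  simp [dd, Pi.add_apply]; ring

lemma dd_add_left (u u' w : Fin 2 → ℝ) : dd (u + u') w = dd u w + dd u' w := by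
  simp [dd, Pi.add_apply]; ring

lemma dd_expand (u u' w w' : Fin 2 → ℝ) (t s : ℝ) :
    dd (u + t • u') (w + s • w')
      = dd u w + (t * dd u' w + s * dd u w' + t * s * dd u' w') := by
  simp [dd, Pi.add_apply, Pi.smul_apply, smul_eq_mul]; ring

lemma mulVec_ne_zero (g : SL2) {v : Fin 2 → ℝ} (hv : v ≠ 0) :
    (↑g : Matrix (Fin 2) (Fin 2) ℝ).mulVec v ≠ 0 := by
  intro h
  apply hv
  have := congrArg (fun w => (↑(g⁻¹) : Matrix (Fin 2) (Fin 2) ℝ).mulVec w) h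
  simp only [Matrix.mulVec_mulVec, Matrix.mulVec_zero] at this
  rw [← Matrix.SpecialLinearGroup.coe_mul, inv_mul_cancel, Matrix.SpecialLinearGroup.coe_one,
    Matrix.one_mulVec] at this
  exact this

instance : MulAction SL2 NZ where
  smul g v := ⟨(↑g : Matrix (Fin 2) (Fin 2) ℝ).mulVec v.1, mulVec_ne_zero g v.2⟩
  one_smul v := by
    apply Subtype.ext
    show (↑(1 : SL2) : Matrix (Fin 2) (Fin 2) ℝ).mulVec v.1 = v.1
    rw [Matrix.SpecialLinearGroup.coe_one, Matrix.one_mulVec]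
  mul_smul g h v := by
    apply Subtype.ext
    show (↑(g * h) : Matrix (Fin 2) (Fin 2) ℝ).mulVec v.1
      = (↑g : Matrix (Fin 2) (Fin 2) ℝ).mulVec ((↑h : Matrix (Fin 2) (Fin 2) ℝ).mulVec v.1)
    rw [Matrix.SpecialLinearGroup.coe_mul, Matrix.mulVec_mulVec]

lemma smul_val (g : SL2) (v : NZ) :
    (g • v).1 = (↑g : Matrix (Fin 2) (Fin 2) ℝ).mulVec v.1 := rfl

lemma collinear_of_dd {e f : Fin 2 → ℝ} (he : e ≠ 0) (h : dd e f = 0) :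
    ∃ μ : ℝ, f = μ • e := by
  have he' : e 0 ≠ 0 ∨ e 1 ≠ 0 := by
    by_contra hc
    push_neg at hc
    exact he (funext fun i => by fin_cases i <;> simp [hc.1, hc.2])
  unfold dd at h
  rcases he' with h0 | h1
  · refine ⟨f 0 / e 0, funext fun i => ?_⟩
    fin_cases i <;> simp [Pi.smul_apply, smul_eq_mul] <;> field_simp <;> linarith
  · refine ⟨f 1 / e 1, funext fun i => ?_⟩
    fin_cases i <;> simp [Pi.smul_apply, smul_eq_mul] <;> field_simp <;> linarith

lemma mulVec_pow {A : Matrix (Fin 2) (Fin 2) ℝ} {e : Fin 2 → ℝ} {l : ℝ}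
    (h : A.mulVec e = l • e) (p : ℕ) : (A ^ p).mulVec e = l ^ p • e := by
  induction p with
  | zero => simp [Matrix.one_mulVec]
  | succ n ih =>
    rw [pow_succ, ← Matrix.mulVec_mulVec, h, Matrix.mulVec_smul, ih, smul_smul, pow_succ]
    ring_nf

lemma inv_eigen (g : SL2) {u : Fin 2 → ℝ} {m : ℝ} (hm : m ≠ 0)
    (h : (↑g : Matrix (Fin 2) (Fin 2) ℝ).mulVec u = m • u) :
    (↑(g⁻¹) : Matrix (Fin 2) (Fin 2) ℝ).mulVec u = m⁻¹ • u := by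
  have h2 := congrArg (fun w => (↑(g⁻¹) : Matrix (Fin 2) (Fin 2) ℝ).mulVec w) h
  simp only [Matrix.mulVec_mulVec, Matrix.mulVec_smul] at h2
  rw [← Matrix.SpecialLinearGroup.coe_mul, inv_mul_cancel, Matrix.SpecialLinearGroup.coe_one,
    Matrix.one_mulVec] at h2
  nth_rewrite 2 [h2]
  rw [smul_smul, inv_mul_cancel₀ hm, one_smul]

/-- existence of eigen data for a hyperbolic element -/
lemma exists_eigen (g : SL2) (h : 2 < |Matrix.trace (↑g : Matrix (Fin 2) (Fin 2) ℝ)|) :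
    ∃ (l : ℝ) (e f : Fin 2 → ℝ), 1 < |l| ∧
      (↑g : Matrix (Fin 2) (Fin 2) ℝ).mulVec e = l • e ∧
      (↑g : Matrix (Fin 2) (Fin 2) ℝ).mulVec f = l⁻¹ • f ∧
      e ≠ 0 ∧ f ≠ 0 ∧ dd e f ≠ 0 := by
  set A : Matrix (Fin 2) (Fin 2) ℝ := ↑g with hA
  have hdet : A.det = 1 := g.2
  set t : ℝ := A.trace with ht
  have ht2 : 4 < t ^ 2 := by nlinarith [h, sq_abs t, abs_nonneg t]
  set s : ℝ := Real.sqrt (t ^ 2 - 4) with hs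
  have hs0 : 0 ≤ s := Real.sqrt_nonneg _
  have hs2 : s ^ 2 = t ^ 2 - 4 := Real.sq_sqrt (by linarith)
  set l : ℝ := if 0 < t then (t + s) / 2 else (t - s) / 2 with hl
  have hquad : l ^ 2 - t * l + 1 = 0 := by
    have key : (2 * l - t) ^ 2 = t ^ 2 - 4 := by
      by_cases hp : 0 < t <;> simp only [hl, hp, if_true, if_false] <;> ring_nf <;> nlinarith [hs2]
    nlinarith [key]
  have habs : 1 < |l| := by
    by_cases hp : 0 < t
    · have htp : 2 < t := by rw [abs_of_pos hp] at h; exact h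
      have : 1 < l := by simp only [hl, hp, if_true]; nlinarith
      calc (1:ℝ) < l := this
        _ ≤ |l| := le_abs_self l
    · have htn : t < -2 := by
        push_neg at hp
        rcases abs_cases t with ⟨h1, _⟩ | ⟨h1, _⟩ <;> linarith
      have : l < -1 := by simp only [hl, hp, if_false]; linarith
      calc (1:ℝ) < -l := by linarith
        _ ≤ |l| := neg_le_abs l
  have hl0 : l ≠ 0 := by intro h0; rw [h0, abs_zero] at habs; linarith
  have hlinv : l⁻¹ = t - l := by
    field_simp
    nlinarith [hquad]
  have hlinv0 : l⁻¹ ≠ 0 := inv_ne_zero hl0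
  have hchar : ∀ m : ℝ, m ^ 2 - t * m + 1 = 0 → (A - m • 1).det = 0 := by
    intro m hm
    rw [Matrix.det_fin_two]
    have htr : t = A 0 0 + A 1 1 := by rw [ht, Matrix.trace_fin_two]
    rw [Matrix.det_fin_two] at hdet
    simp only [Matrix.sub_apply, Matrix.smul_apply, Matrix.one_apply_eq, Matrix.one_apply_ne,
      smul_eq_mul]
    norm_num
    linear_combination hdet + hm + m * htr
  have hquad' : (l⁻¹) ^ 2 - t * l⁻¹ + 1 = 0 := by
    field_simp
    linear_combination hquad
  obtain ⟨e, he0, he⟩ := (Matrix.exists_mulVec_eq_zero_iff).2 (hchar l hquad)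
  obtain ⟨f, hf0, hf⟩ := (Matrix.exists_mulVec_eq_zero_iff).2 (hchar l⁻¹ hquad')
  have heA : A.mulVec e = l • e := by
    have := he
    rw [Matrix.sub_mulVec, Matrix.smul_mulVec, Matrix.one_mulVec, sub_eq_zero] at this
    exact this
  have hfA : A.mulVec f = l⁻¹ • f := by
    have := hf
    rw [Matrix.sub_mulVec, Matrix.smul_mulVec, Matrix.one_mulVec, sub_eq_zero] at this
    exact this
  refine ⟨l, e, f, habs, heA, hfA, he0, hf0, ?_⟩
  intro hD
  obtain ⟨μ, rfl⟩ := collinear_of_dd he0 hD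
  have hμ : μ ≠ 0 := by
    intro h0; apply hf0; rw [h0, zero_smul]
  rw [Matrix.mulVec_smul, heA, smul_smul, smul_smul] at hfA
  have hsc : μ * l = l⁻¹ * μ := by
    by_contra hne
    have hz : (μ * l - l⁻¹ * μ) • e = 0 := by rw [sub_smul, hfA, sub_self]
    rcases smul_eq_zero.1 hz with h' | h'
    · exact hne (sub_eq_zero.1 h')
    · exact he0 h'
  have hll : l = l⁻¹ := mul_left_cancel₀ hμ (by rw [hsc]; ring)
  have : |l| < 1 := by
    rw [hll, abs_inv]
    exact inv_lt_one_of_one_lt₀ habs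
  linarith

/-- separation of cones around non-proportional directions -/
lemma cone_sep {u w : Fin 2 → ℝ} (u' w' : Fin 2 → ℝ) (h : dd u w ≠ 0) :
    ∃ c : ℝ, 0 < c ∧ c ≤ 1 ∧ ∀ t s : ℝ, |t| ≤ c → |s| ≤ c →
      dd (u + t • u') (w + s • w') ≠ 0 := by
  set a := |dd u' w| with ha
  set b := |dd u w'| with hb
  set d := |dd u' w'| with hd
  refine ⟨min (|dd u w| / (a + b + d + 1)) 1, ?_, min_le_right _ _, ?_⟩
  · apply lt_min
    · apply div_pos (abs_pos.2 h)
      positivity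
    · norm_num
  · intro t s hts hss
    set c := min (|dd u w| / (a + b + d + 1)) 1 with hc
    have hc1 : c ≤ 1 := min_le_right _ _
    have hcd : c ≤ |dd u w| / (a + b + d + 1) := min_le_left _ _
    have habd : (0:ℝ) < a + b + d + 1 := by positivity
    rw [dd_expand]
    intro hzero
    have hE : |t * dd u' w + s * dd u w' + t * s * dd u' w'| < |dd u w| := by
      have h1 : |t * dd u' w| ≤ c * a := by
        rw [abs_mul]; exact mul_le_mul_of_nonneg_right hts (abs_nonneg _)
      have h2 : |s * dd u w'| ≤ c * b := by
        rw [abs_mul]; exact mul_le_mul_of_nonneg_right hss (abs_nonneg _)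
      have h3 : |t * s * dd u' w'| ≤ c * d := by
        rw [abs_mul, abs_mul]
        have : |t| * |s| ≤ c * 1 := by
          apply mul_le_mul hts (hss.trans hc1) (abs_nonneg _)
          linarith [lt_min (div_pos (abs_pos.2 h) habd) one_pos]
        calc |t| * |s| * |dd u' w'| ≤ c * 1 * d := by
              exact mul_le_mul_of_nonneg_right this (abs_nonneg _)
          _ = c * d := by ring
      have hsum := (abs_add_three _ _ _).trans (by linarith :
        |t * dd u' w| + |s * dd u w'| + |t * s * dd u' w'| ≤ c * (a + b + d))
      have hlt : c * (a + b + d) < |dd u w| := by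
        have : c * (a + b + d + 1) ≤ |dd u w| := by
          calc c * (a + b + d + 1) ≤ |dd u w| / (a + b + d + 1) * (a + b + d + 1) :=
                mul_le_mul_of_nonneg_right hcd habd.le
            _ = |dd u w| := by field_simp
        have hcpos : 0 < c := lt_min (div_pos (abs_pos.2 h) habd) one_pos
        nlinarith
      linarith
    have : dd u w = -(t * dd u' w + s * dd u w' + t * s * dd u' w') := by linarith [hzero]
    rw [this, abs_neg] at hE
    exact lt_irrefl _ hE

/-- A vector in the cone `{|dd e v| ≤ c |dd v f|}` is a nonzero multiple of `e + t • f`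
with `|t| ≤ c`. -/
lemma mem_cone {e f v : Fin 2 → ℝ} {c : ℝ} (hD : dd e f ≠ 0) (hv : v ≠ 0)
    (h : |dd e v| ≤ c * |dd v f|) :
    ∃ (t μ : ℝ), |t| ≤ c ∧ μ ≠ 0 ∧ v = μ • (e + t • f) := by
  set x := dd v f with hx
  set y := dd e v with hy
  have hx0 : x ≠ 0 := by
    intro h0
    rw [show |x| = 0 from by rw [h0, abs_zero], mul_zero] at h
    have hy0 : y = 0 := abs_eq_zero.1 (le_antisymm h (abs_nonneg _))
    have := cramer e f v
    rw [show dd v f = (0:ℝ) from h0, show dd e v = (0:ℝ) from hy0, zero_smul, zero_smul,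
      add_zero] at this
    exact hv ((smul_eq_zero.1 this.symm).resolve_left hD)
  refine ⟨y / x, x / dd e f, ?_, div_ne_zero hx0 hD, ?_⟩
  · rw [abs_div, div_le_iff₀ (abs_pos.2 hx0)]
    exact h
  · have hcr := cramer e f v
    have : v = (dd e f)⁻¹ • (x • e + y • f) := by
      rw [hcr, smul_smul, inv_mul_cancel₀ hD, one_smul]
    rw [this]
    match_scalars <;> (field_simp; try ring)

lemma disj_aux {u u' w w' : Fin 2 → ℝ} {c : ℝ}
    (hsep : ∀ t s : ℝ, |t| ≤ c → |s| ≤ c → dd (u + t • u') (w + s • w') ≠ 0)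
    (hDu : dd u u' ≠ 0) (hDw : dd w w' ≠ 0) {v : Fin 2 → ℝ} (hv : v ≠ 0)
    (h1 : |dd u v| ≤ c * |dd v u'|) (h2 : |dd w v| ≤ c * |dd v w'|) : False := by
  obtain ⟨t, μ, htc, hμ, hveq⟩ := mem_cone hDu hv h1
  obtain ⟨s, ν, hsc, hν, hveq'⟩ := mem_cone hDw hv h2
  apply hsep t s htc hsc
  have hu : u + t • u' = μ⁻¹ • v := by
    rw [hveq, smul_smul, inv_mul_cancel₀ hμ, one_smul]
  have hw : w + s • w' = ν⁻¹ • v := by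
    rw [hveq', smul_smul, inv_mul_cancel₀ hν, one_smul]
  rw [hu, hw, dd_smul_left, dd_smul_right, dd_self]
  ring

/-- coordinates of the image under `A ^ p` -/
lemma coords_pow {A : Matrix (Fin 2) (Fin 2) ℝ} {l : ℝ} {e f : Fin 2 → ℝ}
    (he : A.mulVec e = l • e) (hf : A.mulVec f = l⁻¹ • f) (hD : dd e f ≠ 0)
    (p : ℕ) (v : Fin 2 → ℝ) :
    dd e ((A ^ p).mulVec v) = (l⁻¹) ^ p * dd e v ∧
    dd ((A ^ p).mulVec v) f = l ^ p * dd v f := by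
  set w := (A ^ p).mulVec v with hw
  have key : (dd v f * l ^ p) • e + (dd e v * (l⁻¹) ^ p) • f = (dd e f) • w := by
    have := congrArg (fun u => (A ^ p).mulVec u) (cramer e f v)
    simp only [Matrix.mulVec_add, Matrix.mulVec_smul, mulVec_pow he, mulVec_pow hf] at this
    rw [← this]
    rw [smul_smul, smul_smul]
  constructor
  · have h1 := congrArg (fun u => dd e u) key
    simp only [dd_add_right, dd_smul_right, dd_self] at h1
    apply mul_left_cancel₀ hD
    linear_combination -h1
  · have h2 := congrArg (fun u => dd u f) key
    simp only [dd_add_left, dd_smul_left, dd_self] at h2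
    apply mul_left_cancel₀ hD
    linear_combination -h2

lemma cone_push {A : Matrix (Fin 2) (Fin 2) ℝ} {l : ℝ} {e f : Fin 2 → ℝ}
    (hl : 1 < |l|) (he : A.mulVec e = l • e) (hf : A.mulVec f = l⁻¹ • f)
    (hD : dd e f ≠ 0) {c : ℝ} (hc : 0 < c) {p : ℕ} (hp : 1 ≤ c * |l| ^ p)
    {v : Fin 2 → ℝ} (hv : c * |dd e v| < |dd v f|) :
    |dd e ((A ^ p).mulVec v)| ≤ c * |dd ((A ^ p).mulVec v) f| := by
  obtain ⟨h1, h2⟩ := coords_pow he hf hD p v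
  rw [h1, h2, abs_mul, abs_mul, abs_pow, abs_pow, abs_inv]
  set L := |l| ^ p with hL
  have hL1 : (0:ℝ) < L := by
    rw [hL]
    have : (0:ℝ) < |l| := lt_trans one_pos hl
    positivity
  rw [inv_pow, ← hL, inv_mul_le_iff₀ hL1]
  set x := |dd v f|
  set y := |dd e v|
  have h3 : c * L * L * (c * y) ≤ c * L * L * x :=
    mul_le_mul_of_nonneg_left hv.le (by positivity)
  have h4 : (1:ℝ) * y ≤ ((c * L) * (c * L)) * y :=
    mul_le_mul_of_nonneg_right (one_le_mul_of_one_le_of_one_le hp hp) (abs_nonneg _)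
  nlinarith [h3, h4]

end

end PPong

open Matrix Pointwise PPong

/-- If `g₁, g₂ ∈ SL(2,ℝ)` are hyperbolic (`|trace| > 2`) and their
eigendirections (fixed points on `ℙ¹(ℝ)`) are pairwise distinct — i.e. they have no
common eigendirection — then for all sufficiently large `p` the matrices `g₁^p` and
`g₂^p` generate a free group of rank 2. -/
theorem powers_generate_free_group
    (g₁ g₂ : Matrix.SpecialLinearGroup (Fin 2) ℝ)
    (h₁ : 2 < |Matrix.trace ((g₁ : Matrix (Fin 2) (Fin 2) ℝ))|)
    (h₂ : 2 < |Matrix.trace ((g₂ : Matrix (Fin 2) (Fin 2) ℝ))|)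
    (hdist : ∀ v : Fin 2 → ℝ, v ≠ 0 →
      (∃ c : ℝ, (g₁ : Matrix (Fin 2) (Fin 2) ℝ).mulVec v = c • v) →
      ¬ ∃ c : ℝ, (g₂ : Matrix (Fin 2) (Fin 2) ℝ).mulVec v = c • v) :
    ∃ P : ℕ, ∀ p : ℕ, P ≤ p →
      Function.Injective
        (FreeGroup.lift (fun i : Fin 2 => if i = 0 then g₁ ^ p else g₂ ^ p) :
          FreeGroup (Fin 2) →* Matrix.SpecialLinearGroup (Fin 2) ℝ) := by
  obtain ⟨l₁, e₁, f₁, hl₁, he₁, hf₁, he₁0, hf₁0, hD₁⟩ := exists_eigen g₁ h₁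
  obtain ⟨l₂, e₂, f₂, hl₂, he₂, hf₂, he₂0, hf₂0, hD₂⟩ := exists_eigen g₂ h₂
  have hl₁0 : l₁ ≠ 0 := by intro h0; rw [h0, abs_zero] at hl₁; linarith
  have hl₂0 : l₂ ≠ 0 := by intro h0; rw [h0, abs_zero] at hl₂; linarith
  -- cross nondegeneracy: no eigenvector of g₁ is proportional to one of g₂
  have cross : ∀ (u w : Fin 2 → ℝ), u ≠ 0 → w ≠ 0 →
      (∃ a : ℝ, (g₁ : Matrix (Fin 2) (Fin 2) ℝ).mulVec u = a • u) →
      (∃ b : ℝ, (g₂ : Matrix (Fin 2) (Fin 2) ℝ).mulVec w = b • w) → dd u w ≠ 0 := by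
    rintro u w hu hw ⟨a, ha⟩ ⟨b, hb⟩ hD
    obtain ⟨μ, rfl⟩ := collinear_of_dd hu hD
    have hμ : μ ≠ 0 := fun h0 => hw (by rw [h0, zero_smul])
    rw [Matrix.mulVec_smul, smul_comm b μ u] at hb
    have hg2u : (g₂ : Matrix (Fin 2) (Fin 2) ℝ).mulVec u = b • u :=
      smul_right_injective (Fin 2 → ℝ) hμ hb
    exact hdist u hu ⟨a, ha⟩ ⟨b, hg2u⟩
  have hE12 : dd e₁ e₂ ≠ 0 := cross e₁ e₂ he₁0 he₂0 ⟨l₁, he₁⟩ ⟨l₂, he₂⟩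
  have hE1F2 : dd e₁ f₂ ≠ 0 := cross e₁ f₂ he₁0 hf₂0 ⟨l₁, he₁⟩ ⟨l₂⁻¹, hf₂⟩
  have hF1E2 : dd f₁ e₂ ≠ 0 := cross f₁ e₂ hf₁0 he₂0 ⟨l₁⁻¹, hf₁⟩ ⟨l₂, he₂⟩
  have hF1F2 : dd f₁ f₂ ≠ 0 := cross f₁ f₂ hf₁0 hf₂0 ⟨l₁⁻¹, hf₁⟩ ⟨l₂⁻¹, hf₂⟩
  have hE2F1 : dd e₂ f₁ ≠ 0 := by rw [dd_antisymm]; exact neg_ne_zero.2 hF1E2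
  have hF1E1 : dd f₁ e₁ ≠ 0 := by rw [dd_antisymm]; exact neg_ne_zero.2 hD₁
  have hF2E2 : dd f₂ e₂ ≠ 0 := by rw [dd_antisymm]; exact neg_ne_zero.2 hD₂
  -- cone separation constants
  obtain ⟨cA, hcA0, _, hsA⟩ := cone_sep (u := e₁) (w := e₂) f₁ f₂ hE12
  obtain ⟨cB, hcB0, _, hsB⟩ := cone_sep (u := e₁) (w := f₂) f₁ e₂ hE1F2
  obtain ⟨cC, hcC0, _, hsC⟩ := cone_sep (u := f₁) (w := f₂) e₁ e₂ hF1F2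
  obtain ⟨cD, hcD0, _, hsD⟩ := cone_sep (u := e₂) (w := f₁) f₂ e₁ hE2F1
  obtain ⟨cE, hcE0, _, hsE⟩ := cone_sep (u := e₁) (w := f₁) f₁ e₁ hD₁
  obtain ⟨cF, hcF0, _, hsF⟩ := cone_sep (u := e₂) (w := f₂) f₂ e₂ hD₂
  set c : ℝ := min (min (min cA cB) (min cC cD)) (min cE cF) with hcdef
  have hc0 : 0 < c := by
    apply lt_min (lt_min (lt_min hcA0 hcB0) (lt_min hcC0 hcD0)) (lt_min hcE0 hcF0)
  have hcA : c ≤ cA := le_trans (le_trans (min_le_left _ _) (min_le_left _ _)) (min_le_left _ _)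
  have hcB : c ≤ cB := le_trans (le_trans (min_le_left _ _) (min_le_left _ _)) (min_le_right _ _)
  have hcC : c ≤ cC := le_trans (le_trans (min_le_left _ _) (min_le_right _ _)) (min_le_left _ _)
  have hcD : c ≤ cD := le_trans (le_trans (min_le_left _ _) (min_le_right _ _)) (min_le_right _ _)
  have hcE : c ≤ cE := le_trans (min_le_right _ _) (min_le_left _ _)
  have hcF : c ≤ cF := le_trans (min_le_right _ _) (min_le_right _ _)
  -- choose P
  obtain ⟨n₁, hn₁⟩ := pow_unbounded_of_one_lt c⁻¹ hl₁
  obtain ⟨n₂, hn₂⟩ := pow_unbounded_of_one_lt c⁻¹ hl₂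
  refine ⟨max n₁ n₂, fun p hPp => ?_⟩
  have hp₁ : 1 ≤ c * |l₁| ^ p := by
    have h1 : c⁻¹ ≤ |l₁| ^ p :=
      le_trans hn₁.le (pow_le_pow_right₀ hl₁.le (le_trans (le_max_left _ _) hPp))
    calc (1:ℝ) = c * c⁻¹ := (mul_inv_cancel₀ hc0.ne').symm
      _ ≤ c * |l₁| ^ p := mul_le_mul_of_nonneg_left h1 hc0.le
  have hp₂ : 1 ≤ c * |l₂| ^ p := by
    have h1 : c⁻¹ ≤ |l₂| ^ p :=
      le_trans hn₂.le (pow_le_pow_right₀ hl₂.le (le_trans (le_max_right _ _) hPp))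
    calc (1:ℝ) = c * c⁻¹ := (mul_inv_cancel₀ hc0.ne').symm
      _ ≤ c * |l₂| ^ p := mul_le_mul_of_nonneg_left h1 hc0.le
  -- ping-pong sets
  set X : Fin 2 → Set NZ :=
    ![{v : NZ | |dd e₁ v.1| ≤ c * |dd v.1 f₁|}, {v : NZ | |dd e₂ v.1| ≤ c * |dd v.1 f₂|}]
    with hXdef
  set Y : Fin 2 → Set NZ :=
    ![{v : NZ | |dd f₁ v.1| ≤ c * |dd v.1 e₁|}, {v : NZ | |dd f₂ v.1| ≤ c * |dd v.1 e₂|}]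
    with hYdef
  have hX0 : ∀ v : NZ, v ∈ X 0 ↔ |dd e₁ v.1| ≤ c * |dd v.1 f₁| := fun v => Iff.rfl
  have hX1 : ∀ v : NZ, v ∈ X 1 ↔ |dd e₂ v.1| ≤ c * |dd v.1 f₂| := fun v => Iff.rfl
  have hY0 : ∀ v : NZ, v ∈ Y 0 ↔ |dd f₁ v.1| ≤ c * |dd v.1 e₁| := fun v => Iff.rfl
  have hY1 : ∀ v : NZ, v ∈ Y 1 ↔ |dd f₂ v.1| ≤ c * |dd v.1 e₂| := fun v => Iff.rfl
  -- membership facts with literal indices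
  have hne0 : (⟨e₁, he₁0⟩ : NZ) ∈ X 0 := (hX0 _).2 (by
    simp only [dd_self, abs_zero]; positivity)
  have hne1 : (⟨e₂, he₂0⟩ : NZ) ∈ X 1 := (hX1 _).2 (by
    simp only [dd_self, abs_zero]; positivity)
  have dXX : Disjoint (X 0) (X 1) := by
    rw [Set.disjoint_left]
    intro v hv0 hv1
    exact disj_aux (fun t s ht hs => hsA t s (ht.trans hcA) (hs.trans hcA)) hD₁ hD₂ v.2
      ((hX0 v).1 hv0) ((hX1 v).1 hv1)
  have dYY : Disjoint (Y 0) (Y 1) := by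
    rw [Set.disjoint_left]
    intro v hv0 hv1
    exact disj_aux (fun t s ht hs => hsC t s (ht.trans hcC) (hs.trans hcC)) hF1E1 hF2E2 v.2
      ((hY0 v).1 hv0) ((hY1 v).1 hv1)
  have dXY00 : Disjoint (X 0) (Y 0) := by
    rw [Set.disjoint_left]
    intro v hv0 hv1
    exact disj_aux (fun t s ht hs => hsE t s (ht.trans hcE) (hs.trans hcE)) hD₁ hF1E1 v.2
      ((hX0 v).1 hv0) ((hY0 v).1 hv1)
  have dXY01 : Disjoint (X 0) (Y 1) := by
    rw [Set.disjoint_left]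
    intro v hv0 hv1
    exact disj_aux (fun t s ht hs => hsB t s (ht.trans hcB) (hs.trans hcB)) hD₁ hF2E2 v.2
      ((hX0 v).1 hv0) ((hY1 v).1 hv1)
  have dXY10 : Disjoint (X 1) (Y 0) := by
    rw [Set.disjoint_left]
    intro v hv0 hv1
    exact disj_aux (fun t s ht hs => hsD t s (ht.trans hcD) (hs.trans hcD)) hD₂ hF1E1 v.2
      ((hX1 v).1 hv0) ((hY0 v).1 hv1)
  have dXY11 : Disjoint (X 1) (Y 1) := by
    rw [Set.disjoint_left]
    intro v hv0 hv1
    exact disj_aux (fun t s ht hs => hsF t s (ht.trans hcF) (hs.trans hcF)) hD₂ hF2E2 v.2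
      ((hX1 v).1 hv0) ((hY1 v).1 hv1)
  -- dynamics with literal indices
  have key₁ : ∀ v : NZ, v ∉ Y 0 → (g₁ ^ p) • v ∈ X 0 := by
    intro v hv
    apply (hX0 _).2
    rw [smul_val, Matrix.SpecialLinearGroup.coe_pow]
    have hv' : c * |dd e₁ v.1| < |dd v.1 f₁| := by
      have := not_le.1 (fun hmem => hv ((hY0 v).2 hmem))
      rwa [abs_dd_comm v.1 e₁, abs_dd_comm f₁ v.1] at this
    exact cone_push hl₁ he₁ hf₁ hD₁ hc0 hp₁ hv'
  have key₂ : ∀ v : NZ, v ∉ Y 1 → (g₂ ^ p) • v ∈ X 1 := by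
    intro v hv
    apply (hX1 _).2
    rw [smul_val, Matrix.SpecialLinearGroup.coe_pow]
    have hv' : c * |dd e₂ v.1| < |dd v.1 f₂| := by
      have := not_le.1 (fun hmem => hv ((hY1 v).2 hmem))
      rwa [abs_dd_comm v.1 e₂, abs_dd_comm f₂ v.1] at this
    exact cone_push hl₂ he₂ hf₂ hD₂ hc0 hp₂ hv'
  have key₃ : ∀ v : NZ, v ∉ X 0 → (g₁ ^ p)⁻¹ • v ∈ Y 0 := by
    intro v hv
    apply (hY0 _).2
    rw [smul_val, ← inv_pow, Matrix.SpecialLinearGroup.coe_pow]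
    have he' : (↑(g₁⁻¹) : Matrix (Fin 2) (Fin 2) ℝ).mulVec e₁ = l₁⁻¹ • e₁ :=
      inv_eigen g₁ hl₁0 he₁
    have hf' : (↑(g₁⁻¹) : Matrix (Fin 2) (Fin 2) ℝ).mulVec f₁ = l₁ • f₁ := by
      have := inv_eigen g₁ (inv_ne_zero hl₁0) hf₁
      rwa [inv_inv] at this
    have hv' : c * |dd f₁ v.1| < |dd v.1 e₁| := by
      have := not_le.1 (fun hmem => hv ((hX0 v).2 hmem))
      rwa [abs_dd_comm v.1 f₁, abs_dd_comm e₁ v.1] at this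
    exact cone_push hl₁ hf' he' hF1E1 hc0 hp₁ hv'
  have key₄ : ∀ v : NZ, v ∉ X 1 → (g₂ ^ p)⁻¹ • v ∈ Y 1 := by
    intro v hv
    apply (hY1 _).2
    rw [smul_val, ← inv_pow, Matrix.SpecialLinearGroup.coe_pow]
    have he' : (↑(g₂⁻¹) : Matrix (Fin 2) (Fin 2) ℝ).mulVec e₂ = l₂⁻¹ • e₂ :=
      inv_eigen g₂ hl₂0 he₂
    have hf' : (↑(g₂⁻¹) : Matrix (Fin 2) (Fin 2) ℝ).mulVec f₂ = l₂ • f₂ := by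
      have := inv_eigen g₂ (inv_ne_zero hl₂0) hf₂
      rwa [inv_inv] at this
    have hv' : c * |dd f₂ v.1| < |dd v.1 e₂| := by
      have := not_le.1 (fun hmem => hv ((hX1 v).2 hmem))
      rwa [abs_dd_comm v.1 f₂, abs_dd_comm e₂ v.1] at this
    exact cone_push hl₂ hf' he' hF2E2 hc0 hp₂ hv'
  apply FreeGroup.injective_lift_of_ping_pong _ X Y
  · intro i
    fin_cases i
    · exact ⟨_, hne0⟩
    · exact ⟨_, hne1⟩
  · intro i j hij
    fin_cases i <;> fin_cases j
    · exact absurd rfl hij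
    · exact dXX
    · exact dXX.symm
    · exact absurd rfl hij
  · intro i j hij
    fin_cases i <;> fin_cases j
    · exact absurd rfl hij
    · exact dYY
    · exact dYY.symm
    · exact absurd rfl hij
  · intro i j
    fin_cases i <;> fin_cases j
    · exact dXY00
    · exact dXY01
    · exact dXY10
    · exact dXY11
  · intro i
    fin_cases i
    · rintro b ⟨v, hv, rfl⟩
      exact key₁ v hv
    · rintro b ⟨v, hv, rfl⟩
      exact key₂ v hv
  · intro i
    fin_cases i
    · rintro b ⟨v, hv, rfl⟩
      exact key₃ v hv
    · rintro b ⟨v, hv, rfl⟩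
      exact key₄ v hv
end

section
/- Let Δ be a measurable space with probability measure μ, partitioned mod 0 into sets Δ^(l) of positive measure (l ∈ ℤ), and let T : Δ → Δ restrict to bimeasurable bijections Δ^(l) → Δ. Suppose T has bounded distortion with constant C₀, meaning that for each finite word l̲ the set Δ^l̲ = {x : T^{j-1}(x) ∈ Δ^(l_j), 1 ≤ j ≤ |l̲|} has positive measure and the normalized pushforward μ^l̲ = T^{|l̲|}_*(μ|Δ^l̲)/μ(Δ^l̲) satisfies (1/C₀)μ ≤ μ^l̲ ≤ C₀μ. Then there exists a T-invariant measure ν on Δ with (1/C₀)μ ≤ ν ≤ C₀μ. -/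
open MeasureTheory

/-- The cylinder `Δ^l̲` associated to a finite word `w = (l₁, …, l_n)`:
the set of points `x` with `T^{j-1}(x) ∈ Δ^(l_j)` for `1 ≤ j ≤ n`. -/
def cylinder {X : Type*} (T : X → X) (D : ℤ → Set X) (n : ℕ) (w : Fin n → ℤ) : Set X :=
  {x | ∀ j : Fin n, T^[(j : ℕ)] x ∈ D (w j)}

open Filter Topology ENNReal

section Aux

variable {Δ : Type*} [MeasurableSpace Δ] (μ : Measure Δ) [IsProbabilityMeasure μ]
  (D : ℤ → Set Δ) (T : Δ → Δ) (C₀ : NNReal)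

lemma cylinder_measurable (hTm : Measurable T) (hDm : ∀ l, MeasurableSet (D l))
    (n : ℕ) (w : Fin n → ℤ) : MeasurableSet (cylinder T D n w) := by
  have h : cylinder T D n w = ⋂ j : Fin n, T^[(j : ℕ)] ⁻¹' D (w j) := by
    ext x
    simp only [_root_.cylinder, Set.mem_setOf_eq, Set.mem_iInter, Set.mem_preimage]
  rw [h]
  exact MeasurableSet.iInter fun j => (hTm.iterate (j : ℕ)) (hDm (w j))

lemma cylinder_disjoint (hdisj : Pairwise (Function.onFun Disjoint D)) (n : ℕ) :
    Pairwise (Function.onFun Disjoint (fun w : Fin n → ℤ => cylinder T D n w)) := by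
  intro w w' hww
  obtain ⟨j, hj⟩ := Function.ne_iff.mp hww
  refine Set.disjoint_left.mpr fun x hx hx' => ?_
  have h1 : T^[(j : ℕ)] x ∈ D (w j) := hx j
  have h2 : T^[(j : ℕ)] x ∈ D (w' j) := hx' j
  exact Set.disjoint_left.mp (hdisj hj) h1 h2

/-- Key bound on iterated pushforwards: `μ s / C₀ ≤ μ (T^[n] ⁻¹' s) ≤ C₀ * μ s`. -/
lemma iterate_bound (hTm : Measurable T) (hDm : ∀ l, MeasurableSet (D l))
    (hdisj : Pairwise (Function.onFun Disjoint D))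
    (hcover : μ (Set.univ \ ⋃ l, D l) = 0)
    (hBD : ∀ (n : ℕ) (w : Fin n → ℤ),
      0 < μ (cylinder T D n w) ∧
      ∀ s : Set Δ, MeasurableSet s →
        μ s / C₀ ≤ μ (cylinder T D n w ∩ T^[n] ⁻¹' s) / μ (cylinder T D n w) ∧
        μ (cylinder T D n w ∩ T^[n] ⁻¹' s) / μ (cylinder T D n w) ≤ C₀ * μ s) :
    ∀ n : ℕ, ∀ s : Set Δ, MeasurableSet s →
      μ s / C₀ ≤ μ (T^[n] ⁻¹' s) ∧ μ (T^[n] ⁻¹' s) ≤ C₀ * μ s := by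
  intro n
  induction n using Nat.strong_induction_on with
  | _ n ih =>
  intro s hs
  have hcylm : ∀ w : Fin n → ℤ, MeasurableSet (cylinder T D n w) :=
    cylinder_measurable D T hTm hDm n
  have hcyld := cylinder_disjoint D T hdisj n
  have hNm : MeasurableSet (Set.univ \ ⋃ l, D l) :=
    MeasurableSet.univ.diff (MeasurableSet.iUnion hDm)
  have hnull : ∀ k, k < n → μ (T^[k] ⁻¹' (Set.univ \ ⋃ l, D l)) = 0 := by
    intro k hk
    have := (ih k hk _ hNm).2
    rw [hcover, mul_zero] at this
    exact le_antisymm this zero_le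
  have hsub : Set.univ \ (⋃ w : Fin n → ℤ, cylinder T D n w) ⊆
      ⋃ k : Fin n, T^[(k : ℕ)] ⁻¹' (Set.univ \ ⋃ l, D l) := by
    intro x hx
    by_contra h
    simp only [Set.mem_iUnion, not_exists, Set.mem_preimage, Set.mem_diff, Set.mem_univ,
      true_and, not_not] at h
    have hex : ∀ j : Fin n, ∃ l, T^[(j : ℕ)] x ∈ D l := by
      intro j
      simpa [Set.mem_iUnion] using h j
    choose w hw using hex
    exact hx.2 (Set.mem_iUnion.mpr ⟨w, fun j => hw j⟩)
  have hcompl : μ (Set.univ \ ⋃ w : Fin n → ℤ, cylinder T D n w) = 0 :=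
    measure_mono_null hsub (measure_iUnion_null fun k => hnull (k : ℕ) k.isLt)
  have hone : μ (⋃ w : Fin n → ℤ, cylinder T D n w) = 1 := by
    refine le_antisymm prob_le_one ?_
    have h1 := measure_le_inter_add_diff μ Set.univ (⋃ w : Fin n → ℤ, cylinder T D n w)
    rw [Set.univ_inter, hcompl, add_zero] at h1
    simpa using h1
  have hsum : ∑' w : Fin n → ℤ, μ (cylinder T D n w) = 1 := by
    rw [← measure_iUnion hcyld hcylm]; exact hone
  set A := T^[n] ⁻¹' s with hA
  have hAm : MeasurableSet A := (hTm.iterate n) hs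
  have hdecomp : μ A = ∑' w : Fin n → ℤ, μ (cylinder T D n w ∩ A) := by
    have hdisj' : Pairwise (Function.onFun Disjoint fun w : Fin n → ℤ =>
        cylinder T D n w ∩ A) := fun w w' hww =>
      (hcyld hww).mono Set.inter_subset_left Set.inter_subset_left
    have hiu : μ (⋃ w : Fin n → ℤ, cylinder T D n w ∩ A) =
        ∑' w : Fin n → ℤ, μ (cylinder T D n w ∩ A) :=
      measure_iUnion hdisj' fun w => (hcylm w).inter hAm
    refine le_antisymm ?_ ?_
    · have h1 := measure_le_inter_add_diff μ A (⋃ w : Fin n → ℤ, cylinder T D n w)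
      have h2 : μ (A \ ⋃ w : Fin n → ℤ, cylinder T D n w) = 0 :=
        measure_mono_null (Set.diff_subset_diff_left (Set.subset_univ A)) hcompl
      rw [h2, add_zero] at h1
      have h3 : A ∩ (⋃ w : Fin n → ℤ, cylinder T D n w) =
          ⋃ w : Fin n → ℤ, cylinder T D n w ∩ A := by
        rw [Set.inter_comm, Set.iUnion_inter]
      rw [h3, hiu] at h1
      exact h1
    · rw [← hiu]
      exact measure_mono (Set.iUnion_subset fun w => Set.inter_subset_right)
  have hterm : ∀ w : Fin n → ℤ,
      μ s / C₀ * μ (cylinder T D n w) ≤ μ (cylinder T D n w ∩ A) ∧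
      μ (cylinder T D n w ∩ A) ≤ ↑C₀ * μ s * μ (cylinder T D n w) := by
    intro w
    have hc0 : μ (cylinder T D n w) ≠ 0 := (hBD n w).1.ne'
    have hcT : μ (cylinder T D n w) ≠ ⊤ := measure_ne_top μ _
    have hb := (hBD n w).2 s hs
    constructor
    · exact (ENNReal.le_div_iff_mul_le (Or.inl hc0) (Or.inl hcT)).mp hb.1
    · exact (ENNReal.div_le_iff_le_mul (Or.inl hc0) (Or.inl hcT)).mp hb.2
  constructor
  · calc μ s / C₀ = μ s / C₀ * ∑' w : Fin n → ℤ, μ (cylinder T D n w) := by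
          rw [hsum, mul_one]
      _ = ∑' w : Fin n → ℤ, μ s / C₀ * μ (cylinder T D n w) := by
          rw [ENNReal.tsum_mul_left]
      _ ≤ ∑' w : Fin n → ℤ, μ (cylinder T D n w ∩ A) :=
          ENNReal.tsum_le_tsum fun w => (hterm w).1
      _ = μ A := hdecomp.symm
  · calc μ A = ∑' w : Fin n → ℤ, μ (cylinder T D n w ∩ A) := hdecomp
      _ ≤ ∑' w : Fin n → ℤ, ↑C₀ * μ s * μ (cylinder T D n w) :=
          ENNReal.tsum_le_tsum fun w => (hterm w).2
      _ = ↑C₀ * μ s * ∑' w : Fin n → ℤ, μ (cylinder T D n w) := by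
          rw [ENNReal.tsum_mul_left]
      _ = ↑C₀ * μ s := by rw [hsum, mul_one]

end Aux

/-- A Markov map with bounded distortion constant `C₀` admits an
invariant measure `ν` with `(1/C₀)·μ ≤ ν ≤ C₀·μ`. -/
theorem bounded_distortion_invariant_measure
    {Δ : Type*} [MeasurableSpace Δ] (μ : Measure Δ) [IsProbabilityMeasure μ]
    (D : ℤ → Set Δ) (T : Δ → Δ) (C₀ : NNReal) (hC₀ : 0 < C₀)
    (hTm : Measurable T)
    (hDm : ∀ l, MeasurableSet (D l))
    (hDpos : ∀ l, 0 < μ (D l))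
    (hdisj : Pairwise (Function.onFun Disjoint D))
    (hcover : μ (Set.univ \ ⋃ l, D l) = 0)
    (hbij : ∀ l, Set.BijOn T (D l) Set.univ)
    (hBD : ∀ (n : ℕ) (w : Fin n → ℤ),
      0 < μ (cylinder T D n w) ∧
      ∀ s : Set Δ, MeasurableSet s →
        μ s / C₀ ≤ μ (cylinder T D n w ∩ T^[n] ⁻¹' s) / μ (cylinder T D n w) ∧
        μ (cylinder T D n w ∩ T^[n] ⁻¹' s) / μ (cylinder T D n w) ≤ C₀ * μ s) :
    ∃ ν : Measure Δ,
      (∀ s : Set Δ, MeasurableSet s → ν (T ⁻¹' s) = ν s) ∧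
      ∀ s : Set Δ, μ s / C₀ ≤ ν s ∧ ν s ≤ C₀ * μ s := by
  classical
  have bnd := iterate_bound μ D T C₀ hTm hDm hdisj hcover hBD
  -- the ultrafilter limit functional
  set U : Ultrafilter ℕ := Filter.hyperfilter ℕ with hU
  have hUle : (U : Filter ℕ) ≤ atTop := Nat.hyperfilter_le_atTop
  set L : (ℕ → ℝ≥0∞) → ℝ≥0∞ := fun f => (Ultrafilter.map f U).lim with hLdef
  have hL : ∀ f : ℕ → ℝ≥0∞, Tendsto f (U : Filter ℕ) (𝓝 (L f)) := by
    intro f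
    have h := (Ultrafilter.map f U).le_nhds_lim
    rwa [Ultrafilter.coe_map] at h
  -- Cesàro averages
  set a : Set Δ → ℕ → ℝ≥0∞ :=
    fun s n => (∑ k ∈ Finset.range n, μ (T^[k] ⁻¹' s)) / (n : ℝ≥0∞) with hadef
  set m : Set Δ → ℝ≥0∞ := fun s => L (a s) with hmdef
  have hLmono : ∀ f g : ℕ → ℝ≥0∞, (∀ n, f n ≤ g n) → L f ≤ L g := fun f g h =>
    le_of_tendsto_of_tendsto' (hL f) (hL g) h
  have hamono : ∀ s t : Set Δ, s ⊆ t → ∀ n, a s n ≤ a t n := by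
    intro s t hst n
    simp only [hadef, div_eq_mul_inv]
    exact mul_le_mul_left
      (Finset.sum_le_sum fun k _ => measure_mono (Set.preimage_mono hst)) _
  have hmmono : ∀ s t : Set Δ, s ⊆ t → m s ≤ m t := fun s t hst =>
    hLmono _ _ (hamono s t hst)
  have hub : ∀ s : Set Δ, MeasurableSet s → m s ≤ ↑C₀ * μ s := by
    intro s hs
    refine le_of_tendsto' (hL (a s)) fun n => ?_
    rcases Nat.eq_zero_or_pos n with rfl | hn
    · simp [hadef]
    · have hsum : ∑ k ∈ Finset.range n, μ (T^[k] ⁻¹' s) ≤ ↑C₀ * μ s * (n : ℝ≥0∞) := by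
        calc ∑ k ∈ Finset.range n, μ (T^[k] ⁻¹' s)
            ≤ ∑ _k ∈ Finset.range n, ↑C₀ * μ s :=
            Finset.sum_le_sum fun k _ => (bnd k s hs).2
          _ = ↑C₀ * μ s * (n : ℝ≥0∞) := by
            rw [Finset.sum_const, Finset.card_range, nsmul_eq_mul, mul_comm]
      exact (ENNReal.div_le_iff_le_mul
        (Or.inl (by exact_mod_cast hn.ne')) (Or.inl (ENNReal.natCast_ne_top n))).mpr hsum
  have hlb : ∀ s : Set Δ, MeasurableSet s → μ s / C₀ ≤ m s := by
    intro s hs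
    refine ge_of_tendsto (hL (a s)) ?_
    refine Filter.Eventually.filter_mono hUle ?_
    refine Filter.eventually_atTop.mpr ⟨1, fun n hn => ?_⟩
    have hn' : n ≠ 0 := by omega
    have hsum : μ s / C₀ * (n : ℝ≥0∞) ≤ ∑ k ∈ Finset.range n, μ (T^[k] ⁻¹' s) := by
      calc μ s / C₀ * (n : ℝ≥0∞) = ∑ _k ∈ Finset.range n, μ s / C₀ := by
            rw [Finset.sum_const, Finset.card_range, nsmul_eq_mul, mul_comm]
        _ ≤ ∑ k ∈ Finset.range n, μ (T^[k] ⁻¹' s) :=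
            Finset.sum_le_sum fun k _ => (bnd k s hs).1
    exact (ENNReal.le_div_iff_mul_le
      (Or.inl (by exact_mod_cast hn')) (Or.inl (ENNReal.natCast_ne_top n))).mpr hsum
  have hm0 : m ∅ = 0 := by
    have hzero : a ∅ = fun _ => (0 : ℝ≥0∞) := by
      funext n; simp [hadef]
    have h2 : Tendsto (a ∅) (U : Filter ℕ) (𝓝 0) := by
      rw [hzero]; exact tendsto_const_nhds
    exact tendsto_nhds_unique (hL (a ∅)) h2
  -- finite additivity
  have haddpt : ∀ s t : Set Δ, MeasurableSet t → Disjoint s t →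
      ∀ n, a (s ∪ t) n = a s n + a t n := by
    intro s t htm hst n
    simp only [hadef]
    rw [← ENNReal.add_div]
    congr 1
    rw [← Finset.sum_add_distrib]
    refine Finset.sum_congr rfl fun k _ => ?_
    rw [Set.preimage_union]
    exact measure_union (hst.preimage _) ((hTm.iterate k) htm)
  have hadd2 : ∀ s t : Set Δ, MeasurableSet t → Disjoint s t →
      m (s ∪ t) = m s + m t := by
    intro s t htm hst
    have h1 : a (s ∪ t) = fun n => a s n + a t n := funext (haddpt s t htm hst)
    have h2 : Tendsto (a (s ∪ t)) (U : Filter ℕ) (𝓝 (m s + m t)) := by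
      rw [h1]; exact (hL (a s)).add (hL (a t))
    exact tendsto_nhds_unique (hL (a (s ∪ t))) h2
  -- countable additivity
  have hmU : ∀ f : ℕ → Set Δ, (∀ i, MeasurableSet (f i)) → Pairwise (Function.onFun Disjoint f) →
      m (⋃ i, f i) = ∑' i, m (f i) := by
    intro f hfm hfd
    have hbUm : ∀ N : ℕ, MeasurableSet (⋃ i ∈ Finset.range N, f i) := fun N =>
      (Finset.range N).measurableSet_biUnion fun i _ => hfm i
    have hfinadd : ∀ N : ℕ, m (⋃ i ∈ Finset.range N, f i) = ∑ i ∈ Finset.range N, m (f i) := by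
      intro N
      induction N with
      | zero => simpa using hm0
      | succ N ihN =>
        have hd : Disjoint (f N) (⋃ i ∈ Finset.range N, f i) := by
          refine Set.disjoint_left.mpr fun x hxN hxU => ?_
          obtain ⟨i, hi, hx⟩ := Set.mem_iUnion₂.mp hxU
          have : N ≠ i := by
            intro h; subst h; exact absurd hi (by simp)
          exact Set.disjoint_left.mp (hfd this) hxN hx
        have heq : (⋃ i ∈ Finset.range (N + 1), f i) = f N ∪ ⋃ i ∈ Finset.range N, f i := by
          rw [Finset.range_add_one, Finset.set_biUnion_insert]
        rw [heq, hadd2 _ _ (hbUm N) hd, ihN, Finset.sum_range_succ, add_comm]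
    refine le_antisymm ?_ ?_
    · -- upper bound
      have hμsum : ∑' i, μ (f i) ≠ ⊤ := by
        rw [← measure_iUnion hfd hfm]; exact measure_ne_top μ _
      have htail : Tendsto (fun N : ℕ => (∑' i, m (f i)) + ↑C₀ * ∑' k, μ (f (k + N)))
          atTop (𝓝 ((∑' i, m (f i)) + ↑C₀ * 0)) :=
        tendsto_const_nhds.add (ENNReal.Tendsto.const_mul
          (ENNReal.tendsto_sum_nat_add (fun i => μ (f i)) hμsum) (Or.inr ENNReal.coe_ne_top))
      rw [mul_zero, add_zero] at htail
      refine ge_of_tendsto' htail fun N => ?_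
      have hsplit : (⋃ i, f i) = (⋃ i ∈ Finset.range N, f i) ∪ ⋃ k, f (k + N) := by
        ext x
        simp only [Set.mem_iUnion, Set.mem_union, Finset.mem_range]
        constructor
        · rintro ⟨i, hi⟩
          rcases lt_or_ge i N with h | h
          · exact Or.inl ⟨i, h, hi⟩
          · exact Or.inr ⟨i - N, by rwa [Nat.sub_add_cancel h]⟩
        · rintro (⟨i, _, hi⟩ | ⟨k, hk⟩)
          · exact ⟨i, hi⟩
          · exact ⟨k + N, hk⟩
      have hdt : Disjoint (⋃ i ∈ Finset.range N, f i) (⋃ k, f (k + N)) := by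
        refine Set.disjoint_left.mpr fun x hxU hxT => ?_
        obtain ⟨i, hi, hx⟩ := Set.mem_iUnion₂.mp hxU
        obtain ⟨k, hk⟩ := Set.mem_iUnion.mp hxT
        have hne : i ≠ k + N := by
          simp only [Finset.mem_range] at hi; omega
        exact Set.disjoint_left.mp (hfd hne) hx hk
      have htm : MeasurableSet (⋃ k, f (k + N)) := MeasurableSet.iUnion fun k => hfm _
      calc m (⋃ i, f i)
          = m (⋃ i ∈ Finset.range N, f i) + m (⋃ k, f (k + N)) := by
            rw [hsplit]; exact hadd2 _ _ htm hdt
        _ ≤ (∑' i, m (f i)) + ↑C₀ * ∑' k, μ (f (k + N)) := by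
            refine add_le_add ?_ ?_
            · rw [hfinadd N]; exact ENNReal.sum_le_tsum _
            · exact (hub _ htm).trans (mul_le_mul_right (measure_iUnion_le _) _)
    · -- lower bound
      rw [ENNReal.tsum_eq_iSup_nat]
      refine iSup_le fun N => ?_
      rw [← hfinadd N]
      exact hmmono _ _ (Set.iUnion₂_subset fun i _ => Set.subset_iUnion f i)
  -- build the measure
  set ν : Measure Δ := Measure.ofMeasurable (fun s _ => m s) hm0 (fun f hfm hfd => hmU f hfm hfd)
    with hνdef
  have hνapp : ∀ s : Set Δ, MeasurableSet s → ν s = m s := fun s hs =>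
    Measure.ofMeasurable_apply s hs
  refine ⟨ν, ?_, ?_⟩
  · -- invariance
    intro s hs
    rw [hνapp _ (hTm hs), hνapp _ hs]
    have hiter : ∀ k : ℕ, T^[k] ⁻¹' (T ⁻¹' s) = T^[k + 1] ⁻¹' s := by
      intro k
      rw [Function.iterate_succ', Set.preimage_comp]
    have hkey : ∀ n : ℕ, a (T ⁻¹' s) n + μ s / (n : ℝ≥0∞) =
        a s n + μ (T^[n] ⁻¹' s) / (n : ℝ≥0∞) := by
      intro n
      simp only [hadef]
      rw [ENNReal.div_add_div_same, ENNReal.div_add_div_same]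
      congr 1
      have h0 : T^[0] ⁻¹' s = s := by simp
      have h1 := Finset.sum_range_succ' (fun k => μ (T^[k] ⁻¹' s)) n
      have h2 := Finset.sum_range_succ (fun k => μ (T^[k] ⁻¹' s)) n
      calc (∑ k ∈ Finset.range n, μ (T^[k] ⁻¹' (T ⁻¹' s))) + μ s
          = (∑ k ∈ Finset.range n, μ (T^[k + 1] ⁻¹' s)) + μ (T^[0] ⁻¹' s) := by
            rw [h0]
            congr 1
            exact Finset.sum_congr rfl fun k _ => by rw [hiter]
        _ = ∑ k ∈ Finset.range (n + 1), μ (T^[k] ⁻¹' s) := h1.symm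
        _ = (∑ k ∈ Finset.range n, μ (T^[k] ⁻¹' s)) + μ (T^[n] ⁻¹' s) := h2
    have hzero1 : Tendsto (fun n : ℕ => μ s / (n : ℝ≥0∞)) (U : Filter ℕ) (𝓝 0) := by
      have h := ENNReal.Tendsto.const_mul (a := μ s) ENNReal.tendsto_inv_nat_nhds_zero
        (Or.inr (measure_ne_top μ s))
      rw [mul_zero] at h
      have h' := h.mono_left hUle
      simpa [div_eq_mul_inv] using h'
    have hzero2 : Tendsto (fun n : ℕ => μ (T^[n] ⁻¹' s) / (n : ℝ≥0∞)) (U : Filter ℕ) (𝓝 0) := by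
      have hb : Tendsto (fun n : ℕ => (↑C₀ * μ s) / (n : ℝ≥0∞)) (U : Filter ℕ) (𝓝 0) := by
        have h := ENNReal.Tendsto.const_mul (a := ↑C₀ * μ s) ENNReal.tendsto_inv_nat_nhds_zero
          (Or.inr (ENNReal.mul_ne_top ENNReal.coe_ne_top (measure_ne_top μ s)))
        rw [mul_zero] at h
        have h' := h.mono_left hUle
        simpa [div_eq_mul_inv] using h'
      refine tendsto_of_tendsto_of_tendsto_of_le_of_le tendsto_const_nhds hb
        (fun n => zero_le) fun n => ?_
      exact ENNReal.div_le_div (bnd n s hs).2 le_rfl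
    have hT1 : Tendsto (fun n : ℕ => a (T ⁻¹' s) n + μ s / (n : ℝ≥0∞)) (U : Filter ℕ)
        (𝓝 (m (T ⁻¹' s) + 0)) := (hL (a (T ⁻¹' s))).add hzero1
    have hT2 : Tendsto (fun n : ℕ => a (T ⁻¹' s) n + μ s / (n : ℝ≥0∞)) (U : Filter ℕ)
        (𝓝 (m s + 0)) := by
      have heq : (fun n : ℕ => a (T ⁻¹' s) n + μ s / (n : ℝ≥0∞)) =
          fun n : ℕ => a s n + μ (T^[n] ⁻¹' s) / (n : ℝ≥0∞) := funext hkey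
      rw [heq]
      exact (hL (a s)).add hzero2
    have := tendsto_nhds_unique hT1 hT2
    simpa using this
  · -- bounds
    intro s
    constructor
    · calc μ s / C₀ ≤ μ (toMeasurable ν s) / C₀ := by
            gcongr
            exact subset_toMeasurable ν s
        _ ≤ m (toMeasurable ν s) := hlb _ (measurableSet_toMeasurable ν s)
        _ = ν (toMeasurable ν s) := (hνapp _ (measurableSet_toMeasurable ν s)).symm
        _ = ν s := measure_toMeasurable s
    · calc ν s ≤ ν (toMeasurable μ s) := measure_mono (subset_toMeasurable μ s)
        _ = m (toMeasurable μ s) := hνapp _ (measurableSet_toMeasurable μ s)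
        _ ≤ ↑C₀ * μ (toMeasurable μ s) := hub _ (measurableSet_toMeasurable μ s)
        _ = ↑C₀ * μ s := by rw [measure_toMeasurable]
end
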